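/- If |θ_i − θ_j| < π/2 for all edges {i,j} ∈ E of a connected graph with positive weights B_{ij} > 0, then the Hessian ∇²U(θ) of U(θ) = Σ_{{i,j}∈E} B_{ij}(1 − cos(θ_i − θ_j)) is a positive semidefinite matrix whose kernel is exactly the span of the all-ones vector. -/

import Mathlib

open Real

/-- **The Hessian of the potential is a PSD Laplacian with kernel `span 𝟙`.**
If `|θ i - θ j| < π/2` on each edge of a connected graph with positive edge
weights `B i j`, then the Hessian `∇²U(θ)` — with entries
`-B i j cos (θ i - θ j)` off the diagonal and `∑_{k≠i} B i k cos (θ i - θ k)`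
on the diagonal — is positive semidefinite and its kernel is exactly the span
of the all-ones vector. -/
theorem gather_broadcast_stmt5
    {N : ℕ} (G : SimpleGraph (Fin N)) [DecidableRel G.Adj]
    (hconn : G.Connected)
    (B : Fin N → Fin N → ℝ)
    (hsymm : ∀ i j, B i j = B j i)
    (hpos : ∀ i j, G.Adj i j → 0 < B i j)
    (hzero : ∀ i j, ¬ G.Adj i j → B i j = 0)
    (θ : Fin N → ℝ)
    (hθ : ∀ i j, G.Adj i j → |θ i - θ j| < π / 2)
    (L : Matrix (Fin N) (Fin N) ℝ)
    (hL : ∀ i j, L i j =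
      if i = j then ∑ k ∈ Finset.univ.erase i, B i k * Real.cos (θ i - θ k)
      else -(B i j * Real.cos (θ i - θ j))) :
    L.PosSemidef ∧
    (∀ x : Fin N → ℝ, L.mulVec x = 0 ↔ ∃ a : ℝ, x = fun _ => a) := by
  classical
  set w : Fin N → Fin N → ℝ := fun i j => B i j * Real.cos (θ i - θ j) with hw
  have hwsymm : ∀ i j, w i j = w j i := by
    intro i j
    simp only [hw]
    rw [hsymm i j, ← Real.cos_neg (θ i - θ j), neg_sub]
  have hwpos : ∀ i j, G.Adj i j → 0 < w i j := by
    intro i j hij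
    have h := hθ i j hij
    have hc : 0 < Real.cos (θ i - θ j) := by
      obtain ⟨h1, h2⟩ := abs_lt.mp h
      exact Real.cos_pos_of_mem_Ioo ⟨h1, h2⟩
    exact mul_pos (hpos i j hij) hc
  have hwnn : ∀ i j, 0 ≤ w i j := by
    intro i j
    by_cases hij : G.Adj i j
    · exact (hwpos i j hij).le
    · simp [hw, hzero i j hij]
  -- off-diagonal entries
  have hLoff : ∀ i j, i ≠ j → L i j = -(w i j) := by
    intro i j hij; rw [hL]; simp [hij, hw]
  have hLdiag : ∀ i, L i i = ∑ k ∈ Finset.univ.erase i, w i k := by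
    intro i; rw [hL]; simp [hw]
  -- row sums are zero
  have hrow : ∀ i, ∑ j, L i j = 0 := by
    intro i
    rw [← Finset.add_sum_erase _ (fun j => L i j) (Finset.mem_univ i), hLdiag]
    have : ∑ j ∈ Finset.univ.erase i, L i j = -∑ j ∈ Finset.univ.erase i, w i j := by
      rw [← Finset.sum_neg_distrib]
      exact Finset.sum_congr rfl fun j hj => hLoff i j (Finset.ne_of_mem_erase hj).symm
    rw [this]; ring
  -- swap lemma
  have swap : ∀ f : Fin N → Fin N → ℝ,
      ∑ i, ∑ j, w i j * f i j = ∑ i, ∑ j, w i j * f j i := by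
    intro f
    rw [Finset.sum_comm]
    exact Finset.sum_congr rfl fun i _ => Finset.sum_congr rfl fun j _ => by rw [hwsymm j i]
  -- quadratic form
  have key : ∀ x : Fin N → ℝ, ∀ i, ∑ j, x i * (L i j * x j)
      = ∑ j, w i j * (x i ^ 2 - x i * x j) := by
    intro x i
    rw [← Finset.add_sum_erase _ (fun j => x i * (L i j * x j)) (Finset.mem_univ i),
        ← Finset.add_sum_erase _ (fun j => w i j * (x i ^ 2 - x i * x j)) (Finset.mem_univ i)]
    have h1 : x i * (L i i * x i) = ∑ k ∈ Finset.univ.erase i, w i k * x i ^ 2 := by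
      rw [hLdiag, Finset.sum_mul, Finset.mul_sum]
      exact Finset.sum_congr rfl fun k _ => by ring
    have h2 : ∀ j ∈ Finset.univ.erase i, x i * (L i j * x j)
        = w i j * (x i ^ 2 - x i * x j) - w i j * x i ^ 2 := by
      intro j hj
      rw [hLoff i j (Finset.ne_of_mem_erase hj).symm]; ring
    rw [Finset.sum_congr rfl h2, Finset.sum_sub_distrib, h1]
    ring
  have hquad : ∀ x : Fin N → ℝ,
      dotProduct x (L.mulVec x) = (1/2) * ∑ i, ∑ j, w i j * (x i - x j) ^ 2 := by
    intro x
    have hlhs : dotProduct x (L.mulVec x) = ∑ i, ∑ j, w i j * (x i ^ 2 - x i * x j) := by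
      simp only [dotProduct, Matrix.mulVec, Finset.mul_sum]
      exact Finset.sum_congr rfl fun i _ => key x i
    have e2 := swap (fun i j => x i ^ 2 - x i * x j)
    have hsplit : ∑ i, ∑ j, w i j * (x i - x j) ^ 2
        = ∑ i, ∑ j, (w i j * (x i ^ 2 - x i * x j) + w i j * (x j ^ 2 - x j * x i)) := by
      exact Finset.sum_congr rfl fun i _ => Finset.sum_congr rfl fun j _ => by ring
    have hsum : ∑ i, ∑ j, (w i j * (x i ^ 2 - x i * x j) + w i j * (x j ^ 2 - x j * x i))
        = (∑ i, ∑ j, w i j * (x i ^ 2 - x i * x j))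
          + ∑ i, ∑ j, w i j * (x j ^ 2 - x j * x i) := by
      rw [← Finset.sum_add_distrib]
      exact Finset.sum_congr rfl fun i _ => Finset.sum_add_distrib
    rw [hlhs, hsplit, hsum, ← e2]; ring
  have hherm : L.IsHermitian := by
    ext i j
    simp only [Matrix.conjTranspose_apply, RCLike.star_def, starRingEnd_apply, star_trivial]
    by_cases hij : i = j
    · subst hij; rfl
    · rw [hLoff j i (Ne.symm hij), hLoff i j hij, hwsymm i j]
  have hnn : ∀ x : Fin N → ℝ, 0 ≤ dotProduct x (L.mulVec x) := by
    intro x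
    rw [hquad x]
    have : 0 ≤ ∑ i, ∑ j, w i j * (x i - x j) ^ 2 :=
      Finset.sum_nonneg fun i _ => Finset.sum_nonneg fun j _ =>
        mul_nonneg (hwnn i j) (sq_nonneg _)
    linarith
  refine ⟨⟨hherm, fun x => ?_⟩, fun x => ⟨fun hx => ?_, fun ⟨a, ha⟩ => ?_⟩⟩
  · simpa [dotProduct, Matrix.mulVec, Finsupp.sum_fintype, Finset.mul_sum, mul_assoc] using hnn x
  · -- kernel is constant vectors
    have hq0 : ∑ i, ∑ j, w i j * (x i - x j) ^ 2 = 0 := by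
      have : dotProduct x (L.mulVec x) = 0 := by rw [hx]; simp
      rw [hquad x] at this; linarith
    have hterm : ∀ i ∈ Finset.univ, ∀ j ∈ Finset.univ, w i j * (x i - x j) ^ 2 = 0 := by
      have houter := (Finset.sum_eq_zero_iff_of_nonneg
        (fun i _ => Finset.sum_nonneg fun j _ =>
          mul_nonneg (hwnn i j) (sq_nonneg _))).mp hq0
      intro i hi
      exact fun j hj => (Finset.sum_eq_zero_iff_of_nonneg
        (fun j _ => mul_nonneg (hwnn i j) (sq_nonneg _))).mp (houter i hi) j hj
    have hadj : ∀ i j, G.Adj i j → x i = x j := by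
      intro i j hij
      have h0 := hterm i (Finset.mem_univ i) j (Finset.mem_univ j)
      have hwij := hwpos i j hij
      have : (x i - x j) ^ 2 = 0 := by
        by_contra h
        exact h (by
          have := mul_eq_zero.mp h0
          rcases this with h' | h'
          · exact absurd h' hwij.ne'
          · exact h')
      have := pow_eq_zero_iff (n := 2) (by norm_num) |>.mp this
      linarith
    have hreach : ∀ i j : Fin N, G.Reachable i j → x i = x j := by
      intro i j h
      obtain ⟨p⟩ := h
      induction p with
      | nil => rfl
      | cons h' p ih => exact (hadj _ _ h').trans ih
    have : Nonempty (Fin N) := hconn.nonempty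
    obtain ⟨i0⟩ := this
    exact ⟨x i0, funext fun i => (hreach i0 i (hconn.preconnected i0 i)).symm⟩
  · subst ha
    funext i
    simp only [Matrix.mulVec, dotProduct, Pi.zero_apply]
    rw [← Finset.sum_mul, hrow i, zero_mul]
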